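/- Let G be a finite group and let H, K be subgroups of G such that H·H^x = H^x·H (as sets) for every x ∈ K, where H^x denotes the conjugate of H by x. If K ≤ H^K, where H^K = ⟨H^x : x ∈ K⟩ denotes the normal closure of H under conjugation by elements of K, then K ≤ H. -/

import Mathlib

set_option maxHeartbeats 1000000

open Pointwise

/-- The conjugate subgroup `H^x = x⁻¹ H x`. -/
def conjSub {G : Type*} [Group G] (H : Subgroup G) (x : G) : Subgroup G :=
  Subgroup.map ((MulAut.conj x⁻¹).toMonoidHom) H

section aux

variable {G : Type*} [Group G]

lemma mem_conjSub {H : Subgroup G} {x g : G} : g ∈ conjSub H x ↔ x * g * x⁻¹ ∈ H := by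
  constructor
  · rintro ⟨h, hh, rfl⟩
    have e : x * ((MulAut.conj x⁻¹).toMonoidHom h) * x⁻¹ = h := by
      simp [MulAut.conj_apply]; group
    rwa [e]
  · intro hg
    refine ⟨x * g * x⁻¹, hg, ?_⟩
    simp [MulAut.conj_apply]; group

lemma conjSub_conjSub {H : Subgroup G} (a b : G) :
    conjSub (conjSub H a) b = conjSub H (a * b) := by
  ext g
  rw [mem_conjSub, mem_conjSub, mem_conjSub]
  constructor
  · intro h
    have e : a * (b * g * b⁻¹) * a⁻¹ = (a * b) * g * (a * b)⁻¹ := by group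
    rwa [e] at h
  · intro h
    have e : a * (b * g * b⁻¹) * a⁻¹ = (a * b) * g * (a * b)⁻¹ := by group
    rwa [e]

lemma conjSub_eq_of_mem {H : Subgroup G} {k : G} (hk : k ∈ H) : conjSub H k = H := by
  ext g
  rw [mem_conjSub]
  constructor
  · intro h
    have h2 := H.mul_mem (H.mul_mem (H.inv_mem hk) h) hk
    have e : k⁻¹ * (k * g * k⁻¹) * k = g := by group
    rwa [e] at h2
  · intro h
    exact H.mul_mem (H.mul_mem hk h) (H.inv_mem hk)

lemma mem_conj_mul {A B : Subgroup G} {x g : G} :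
    g ∈ (conjSub A x : Set G) * (conjSub B x : Set G) ↔
      x * g * x⁻¹ ∈ (A : Set G) * (B : Set G) := by
  constructor
  · rintro ⟨u, hu, v, hv, rfl⟩
    refine ⟨x * u * x⁻¹, mem_conjSub.mp hu, x * v * x⁻¹, mem_conjSub.mp hv, by group⟩
  · rintro ⟨p, hp, q, hq, hpq⟩
    refine ⟨x⁻¹ * p * x, mem_conjSub.mpr (by simpa [mul_assoc] using hp),
      x⁻¹ * q * x, mem_conjSub.mpr (by simpa [mul_assoc] using hq), ?_⟩
    have e : (x⁻¹ * p * x) * (x⁻¹ * q * x) = x⁻¹ * (p * q) * x := by group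
    show (x⁻¹ * p * x) * (x⁻¹ * q * x) = g
    rw [e]
    have hpq' : p * q = x * g * x⁻¹ := hpq
    rw [hpq']; group

/-- the "cute" lemma : x ∈ H · H^x → x ∈ H -/
lemma mem_of_mem_mul_conj {H : Subgroup G} {x : G}
    (hx : x ∈ (H : Set G) * (conjSub H x : Set G)) : x ∈ H := by
  obtain ⟨a, ha, v, hv, hav⟩ := hx
  have hb : x * v * x⁻¹ ∈ H := mem_conjSub.mp hv
  have hv' : v = a⁻¹ * x := by rw [← hav]; group
  rw [hv'] at hb
  have e : x * (a⁻¹ * x) * x⁻¹ = x * a⁻¹ := by group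
  rw [e] at hb
  have e2 : x = (x * a⁻¹) * a := by group
  rw [e2]
  exact H.mul_mem hb ha

/-- product of two permuting subgroups is their join (as a set) -/
lemma coe_sup_of_comm (A B : Subgroup G)
    (h : (A : Set G) * (B : Set G) = (B : Set G) * (A : Set G)) :
    ((A ⊔ B : Subgroup G) : Set G) = (A : Set G) * (B : Set G) := by
  let S : Subgroup G :=
    { carrier := (A : Set G) * (B : Set G)
      one_mem' := ⟨1, A.one_mem, 1, B.one_mem, one_mul 1⟩
      mul_mem' := by
        rintro p q ⟨a1, ha1, b1, hb1, rfl⟩ ⟨a2, ha2, b2, hb2, rfl⟩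
        have hm : b1 * a2 ∈ (B : Set G) * (A : Set G) := ⟨b1, hb1, a2, ha2, rfl⟩
        rw [← h] at hm
        obtain ⟨a3, ha3, b3, hb3, he⟩ := hm
        have he' : a3 * b3 = b1 * a2 := he
        refine ⟨a1 * a3, A.mul_mem ha1 ha3, b3 * b2, B.mul_mem hb3 hb2, ?_⟩
        calc a1 * a3 * (b3 * b2) = a1 * (a3 * b3) * b2 := by group
        _ = a1 * (b1 * a2) * b2 := by rw [he']
        _ = a1 * b1 * (a2 * b2) := by group
      inv_mem' := by
        rintro p ⟨a, ha, b, hb, rfl⟩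
        have hm : b⁻¹ * a⁻¹ ∈ (B : Set G) * (A : Set G) :=
          ⟨b⁻¹, B.inv_mem hb, a⁻¹, A.inv_mem ha, rfl⟩
        rw [← h] at hm
        simpa [mul_inv_rev] using hm }
  have h1 : A ⊔ B ≤ S := by
    refine sup_le ?_ ?_
    · intro a ha; exact ⟨a, ha, 1, B.one_mem, mul_one a⟩
    · intro b hb; exact ⟨1, A.one_mem, b, hb, one_mul b⟩
  have h2 : (S : Set G) ⊆ ((A ⊔ B : Subgroup G) : Set G) := by
    rintro p ⟨a, ha, b, hb, rfl⟩
    exact Subgroup.mul_mem _ (Subgroup.mem_sup_left ha) (Subgroup.mem_sup_right hb)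
  exact le_antisymm h1 h2

end aux

theorem stmt0 {G : Type*} [Group G] [Fintype G] (H K : Subgroup G)
    (hcomm : ∀ x ∈ K, (H : Set G) * (conjSub H x : Set G) = (conjSub H x : Set G) * (H : Set G))
    (hle : K ≤ ⨆ x ∈ K, conjSub H x) :
    K ≤ H := by
  -- pairwise commuting of all K-conjugates, derived from hcomm, stated generically
  have pair : ∀ (H : Subgroup G),
      (∀ x ∈ K, (H : Set G) * (conjSub H x : Set G) = (conjSub H x : Set G) * (H : Set G)) →
      ∀ a ∈ K, ∀ b ∈ K,
      (conjSub H a : Set G) * (conjSub H b : Set G)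
        = (conjSub H b : Set G) * (conjSub H a : Set G) := by
    intro H hcomm a ha b hb
    have hba : b * a⁻¹ ∈ K := K.mul_mem hb (K.inv_mem ha)
    set C := conjSub H (b * a⁻¹) with hC
    have e : conjSub C a = conjSub H b := by
      rw [hC, conjSub_conjSub]
      congr 1
      group
    have h1 : ∀ g : G, g ∈ (conjSub H a : Set G) * (conjSub H b : Set G) ↔
        a * g * a⁻¹ ∈ (H : Set G) * (C : Set G) := by
      intro g; rw [← e]; exact mem_conj_mul
    have h2 : ∀ g : G, g ∈ (conjSub H b : Set G) * (conjSub H a : Set G) ↔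
        a * g * a⁻¹ ∈ (C : Set G) * (H : Set G) := by
      intro g; rw [← e]; exact mem_conj_mul
    ext g
    rw [h1 g, h2 g, hcomm _ hba]
  -- main induction on the "co-size" of H
  have key : ∀ n : ℕ, ∀ H : Subgroup G, Fintype.card G - Nat.card H = n →
      (∀ x ∈ K, (H : Set G) * (conjSub H x : Set G) = (conjSub H x : Set G) * (H : Set G)) →
      K ≤ ⨆ x ∈ K, conjSub H x → K ≤ H := by
    intro n
    induction n using Nat.strong_induction_on with
    | _ n ih =>
      intro H hn hcomm hle
      by_cases hall : ∀ x ∈ K, conjSub H x ≤ H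
      · exact hle.trans (iSup₂_le hall)
      · push_neg at hall
        obtain ⟨k₀, hk₀K, hk₀⟩ := hall
        set H' := H ⊔ conjSub H k₀ with hH'
        have hcoeH' : (H' : Set G) = (H : Set G) * (conjSub H k₀ : Set G) :=
          coe_sup_of_comm _ _ (hcomm k₀ hk₀K)
        -- conjugates of H'
        have hconj : ∀ y : G, conjSub H' y = conjSub H y ⊔ conjSub H (k₀ * y) := by
          intro y
          rw [hH']
          show Subgroup.map _ (H ⊔ conjSub H k₀) = _
          rw [Subgroup.map_sup]
          congr 1
          exact conjSub_conjSub k₀ y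
        have hcoeconj : ∀ y ∈ K, (conjSub H' y : Set G)
            = (conjSub H y : Set G) * (conjSub H (k₀ * y) : Set G) := by
          intro y hy
          rw [hconj y]
          exact coe_sup_of_comm _ _ (pair H hcomm y hy (k₀ * y) (K.mul_mem hk₀K hy))
        -- hcomm for H'
        have hcomm' : ∀ y ∈ K, (H' : Set G) * (conjSub H' y : Set G)
            = (conjSub H' y : Set G) * (H' : Set G) := by
          intro y hy
          have hk₀y : k₀ * y ∈ K := K.mul_mem hk₀K hy
          have c1 : Commute (H : Set G) (conjSub H y : Set G) := hcomm y hy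
          have c2 : Commute (H : Set G) (conjSub H (k₀ * y) : Set G) := hcomm _ hk₀y
          have c3 : Commute (conjSub H k₀ : Set G) (conjSub H y : Set G) :=
            pair H hcomm k₀ hk₀K y hy
          have c4 : Commute (conjSub H k₀ : Set G) (conjSub H (k₀ * y) : Set G) :=
            pair H hcomm k₀ hk₀K _ hk₀y
          have total : Commute ((H : Set G) * (conjSub H k₀ : Set G))
              ((conjSub H y : Set G) * (conjSub H (k₀ * y) : Set G)) :=
            (c1.mul_right c2).mul_left (c3.mul_right c4)
          rw [hcoeH', hcoeconj y hy]
          exact total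
        -- hle for H'
        have hle' : K ≤ ⨆ x ∈ K, conjSub H' x := by
          refine hle.trans (iSup₂_mono fun x hx => ?_)
          exact Subgroup.map_mono le_sup_left
        -- cardinality decreases
        have hlt : H < H' := by
          refine lt_iff_le_not_ge.mpr ⟨le_sup_left, fun hba => hk₀ ?_⟩
          exact le_trans le_sup_right hba
        have hcardlt : Nat.card H < Nat.card H' := by
          have hss : (H : Set G) ⊂ (H' : Set G) := by
            exact_mod_cast SetLike.coe_ssubset_coe.mpr hlt
          have := Set.ncard_lt_ncard hss (Set.toFinite _)
          rw [← Nat.card_coe_set_eq, ← Nat.card_coe_set_eq] at this; exact this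
        have hcardle : Nat.card H' ≤ Fintype.card G := by
          have := Subgroup.card_le_card_group H'
          simpa [Nat.card_eq_fintype_card] using this
        have hmeas : Fintype.card G - Nat.card H' < n := by omega
        have hKH' := ih _ hmeas H' rfl hcomm' hle'
        -- derive contradiction
        have hk₀mem : (k₀ : G) ∈ (H : Set G) * (conjSub H k₀ : Set G) := by
          rw [← hcoeH']
          exact hKH' hk₀K
        have : conjSub H k₀ ≤ H := (conjSub_eq_of_mem (mem_of_mem_mul_conj hk₀mem)).le
        exact absurd this hk₀
  exact key _ H rfl hcomm hle
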